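/- Assume (A,B) is reachable. Then the convolutional code C(A,B,C,D) is non-catastrophic (admits a right prime generator matrix, equivalently a polynomial parity-check matrix) if and only if the pair (A,C) is observable, i.e., rank[C; CA; ...; CA^{s-1}] = s. -/

import Mathlib

open Polynomial Matrix

set_option maxHeartbeats 1000000



section Key
variable {F : Type*} [Field F] {s : ℕ}

/-- If `X • v = A v + w` with `w` a vector of "constants" (natDegree 0), then `v = 0`. -/
lemma keyA (A : Matrix (Fin s) (Fin s) F) (v w : Fin s → F[X])
    (hv : (X : F[X]) • v = (A.map Polynomial.C).mulVec v + w)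
    (hw : ∀ i, (w i).natDegree = 0) : v = 0 := by
  by_contra hvne
  obtain ⟨i1, hi1⟩ : ∃ i, v i ≠ 0 := by
    by_contra h; push_neg at h; exact hvne (funext h)
  set d := Finset.univ.sup (fun i => (v i).natDegree) with hd
  have hdle : ∀ j, (v j).natDegree ≤ d := fun j => Finset.le_sup (f := fun i => (v i).natDegree) (Finset.mem_univ j)
  obtain ⟨i0, hi0ne, hi0d⟩ : ∃ i0, v i0 ≠ 0 ∧ (v i0).natDegree = d := by
    obtain ⟨i2, _, hi2⟩ := Finset.exists_mem_eq_sup Finset.univ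
      ⟨i1, Finset.mem_univ i1⟩ (fun i => (v i).natDegree)
    by_cases h2 : v i2 = 0
    · refine ⟨i1, hi1, le_antisymm (hdle i1) ?_⟩
      rw [hd, hi2, h2]; simp
    · exact ⟨i2, h2, hi2.symm⟩
  have hcoeff := congrFun hv i0
  have hL : ((X : F[X]) • v) i0 = X * v i0 := rfl
  have := congrArg (fun p => p.coeff (d + 1)) hcoeff
  simp only [hL] at this
  rw [Polynomial.coeff_X_mul] at this
  have hR : (((A.map Polynomial.C).mulVec v + w) i0).coeff (d+1) = 0 := by
    have h1 : ((A.map Polynomial.C).mulVec v i0).coeff (d+1) = 0 := by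
      unfold Matrix.mulVec dotProduct
      rw [Polynomial.finset_sum_coeff]
      refine Finset.sum_eq_zero fun j _ => ?_
      simp only [Matrix.map_apply]
      rw [Polynomial.coeff_C_mul, Polynomial.coeff_eq_zero_of_natDegree_lt
        (lt_of_le_of_lt (hdle j) (Nat.lt_succ_self d)), mul_zero]
    have h2 : (w i0).coeff (d+1) = 0 :=
      Polynomial.coeff_eq_zero_of_natDegree_lt (by rw [hw i0]; omega)
    simp [Pi.add_apply, Polynomial.coeff_add, h1, h2]
  rw [hR] at this
  rw [← hi0d] at this
  exact hi0ne (Polynomial.leadingCoeff_eq_zero.mp this)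

end Key

section RankLemmas
variable {F : Type*} [Field F] {m p : Type*} [Fintype m] [Fintype p] [DecidableEq m] [DecidableEq p]

lemma exists_left_inv_of_rank (M : Matrix m p F) (h : M.rank = Fintype.card p) :
    ∃ N : Matrix p m F, N * M = 1 := by
  have hinj : LinearMap.ker (Matrix.toLin' M) = ⊥ := by
    have hrn := LinearMap.finrank_range_add_finrank_ker (Matrix.toLin' M)
    have : Module.finrank F (p → F) = Fintype.card p := Module.finrank_fintype_fun_eq_card F
    rw [this] at hrn
    have hrk : Module.finrank F (LinearMap.range (Matrix.toLin' M)) = Fintype.card p := by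
      rw [← h]; rfl
    have : Module.finrank F (LinearMap.ker (Matrix.toLin' M)) = 0 := by omega
    exact Submodule.finrank_eq_zero.mp this
  obtain ⟨g, hg⟩ := LinearMap.exists_leftInverse_of_injective (Matrix.toLin' M) hinj
  refine ⟨LinearMap.toMatrix' g, ?_⟩
  have : LinearMap.toMatrix' (g.comp (Matrix.toLin' M)) = LinearMap.toMatrix' g * M := by
    rw [LinearMap.toMatrix'_comp, LinearMap.toMatrix'_toLin']
  rw [← this, hg, LinearMap.toMatrix'_id]

lemma surjective_of_rank_rows (M : Matrix m p F) (h : M.rank = Fintype.card m) :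
    Function.Surjective (Matrix.toLin' M) := by
  rw [← LinearMap.range_eq_top]
  apply Submodule.eq_top_of_finrank_eq
  rw [Module.finrank_fintype_fun_eq_card]
  exact h

end RankLemmas


section Zvec
variable {F : Type*} [Field F] {s : ℕ}

/-- Embed a constant vector into polynomial vectors. -/
noncomputable def cvec {m : Type*} (w : m → F) : m → F[X] := fun l => Polynomial.C (w l)

lemma mapC_mulVec_cvec {m p : Type*} [Fintype p] (M : Matrix m p F) (u : p → F) :
    (M.map Polynomial.C).mulVec (cvec u) = cvec (M.mulVec u) := by
  funext j
  unfold cvec Matrix.mulVec dotProduct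
  simp only [Matrix.map_apply, ← Polynomial.C_mul, map_sum]

lemma mapC_mulVec_smul {m p : Type*} [Fintype p] (M : Matrix m p F) (r : F[X])
    (v : p → F[X]) : (M.map Polynomial.C).mulVec (r • v) = r • (M.map Polynomial.C).mulVec v := by
  funext j
  unfold Matrix.mulVec dotProduct
  simp [Finset.mul_sum, Pi.smul_apply, smul_eq_mul]
  exact Finset.sum_congr rfl fun l _ => by ring

/-- Partial-sum trajectory. -/
noncomputable def zvec (A : Matrix (Fin s) (Fin s) F) (w : Fin s → F) : ℕ → (Fin s → F[X])
  | 0 => 0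
  | (i+1) => (X : F[X]) • zvec A w i + cvec ((A ^ i).mulVec w)

lemma zvec_spec (A : Matrix (Fin s) (Fin s) F) (w : Fin s → F) (i : ℕ) :
    (X : F[X]) • zvec A w i - (A.map Polynomial.C).mulVec (zvec A w i) =
      (X : F[X]) ^ i • cvec w - cvec ((A ^ i).mulVec w) := by
  induction i with
  | zero =>
    show (X : F[X]) • (0 : Fin s → F[X]) - (A.map Polynomial.C).mulVec 0 = _
    simp [pow_zero, Matrix.one_mulVec]
  | succ i ih =>
    have hA : (A.map Polynomial.C).mulVec ((X : F[X]) • zvec A w i) =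
        (X : F[X]) • (A.map Polynomial.C).mulVec (zvec A w i) := mapC_mulVec_smul _ _ _
    have hc : (A.map Polynomial.C).mulVec (cvec ((A ^ i).mulVec w)) =
        cvec ((A ^ (i+1)).mulVec w) := by
      rw [mapC_mulVec_cvec, Matrix.mulVec_mulVec, ← pow_succ']
    have key : (X:F[X]) • ((X:F[X]) • zvec A w i) - (X:F[X]) • ((A.map Polynomial.C).mulVec (zvec A w i)) =
        (X:F[X])^(i+1) • cvec w - (X:F[X]) • cvec ((A^i).mulVec w) := by
      rw [← smul_sub, ih, smul_sub, smul_smul, ← pow_succ']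
    show (X : F[X]) • ((X : F[X]) • zvec A w i + cvec ((A ^ i).mulVec w)) -
        (A.map Polynomial.C).mulVec ((X : F[X]) • zvec A w i + cvec ((A ^ i).mulVec w)) = _
    rw [Matrix.mulVec_add, hA, hc, smul_add]
    calc (X:F[X]) • ((X:F[X]) • zvec A w i) + (X:F[X]) • cvec ((A ^ i).mulVec w) -
          ((X:F[X]) • (A.map Polynomial.C).mulVec (zvec A w i) + cvec ((A ^ (i+1)).mulVec w))
        = ((X:F[X]) • ((X:F[X]) • zvec A w i) - (X:F[X]) • ((A.map Polynomial.C).mulVec (zvec A w i)))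
            + (X:F[X]) • cvec ((A ^ i).mulVec w) - cvec ((A ^ (i+1)).mulVec w) := by abel
      _ = ((X:F[X])^(i+1) • cvec w - (X:F[X]) • cvec ((A^i).mulVec w))
            + (X:F[X]) • cvec ((A ^ i).mulVec w) - cvec ((A ^ (i+1)).mulVec w) := by rw [key]
      _ = (X:F[X])^(i+1) • cvec w - cvec ((A ^ (i+1)).mulVec w) := by abel

lemma zvec_output {nk : ℕ} (A : Matrix (Fin s) (Fin s) F) (Cm : Matrix (Fin nk) (Fin s) F)
    (w : Fin s → F) (i : ℕ) (h : ∀ m, m < i → Cm.mulVec ((A ^ m).mulVec w) = 0) :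
    (Cm.map Polynomial.C).mulVec (zvec A w i) = 0 := by
  induction i with
  | zero =>
    show (Cm.map Polynomial.C).mulVec 0 = 0
    simp
  | succ i ih =>
    show (Cm.map Polynomial.C).mulVec ((X : F[X]) • zvec A w i + cvec ((A ^ i).mulVec w)) = 0
    rw [Matrix.mulVec_add, mapC_mulVec_smul, mapC_mulVec_cvec,
      ih (fun m hm => h m (Nat.lt_succ_of_lt hm)), h i (Nat.lt_succ_self i)]
    funext j; simp [cvec]

end Zvec
section Helpers
variable {F : Type*} [Field F]

lemma cvec_sum {m γ : Type*} (S : Finset γ) (f : γ → m → F) :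
    cvec (∑ t ∈ S, f t) = ∑ t ∈ S, cvec (f t) := by
  funext j; simp [cvec, Finset.sum_apply]

lemma C_smul_cvec {m : Type*} (a : F) (w : m → F) :
    (Polynomial.C a : F[X]) • cvec w = cvec (a • w) := by
  funext j; simp [cvec, Polynomial.C_mul]

lemma mulVec_sumv {α : Type*} [CommRing α] {m p γ : Type*} [Fintype p] (M : Matrix m p α)
    (S : Finset γ) (f : γ → p → α) :
    M.mulVec (∑ t ∈ S, f t) = ∑ t ∈ S, M.mulVec (f t) := by
  funext j
  simp only [Matrix.mulVec, dotProduct, Finset.sum_apply, Finset.mul_sum]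
  rw [Finset.sum_comm]

lemma sumMat_mulVec {α : Type*} [CommRing α] {m p γ : Type*} [Fintype p] (S : Finset γ)
    (N : γ → Matrix m p α) (v : p → α) :
    (∑ t ∈ S, N t).mulVec v = ∑ t ∈ S, (N t).mulVec v := by
  funext j
  simp only [Matrix.mulVec, dotProduct, Matrix.sum_apply, Finset.sum_apply, Finset.sum_mul]
  rw [Finset.sum_comm]

lemma smul_vec_cancel {m : Type*} {q : F[X]} (hq : q ≠ 0) {a b : m → F[X]}
    (h : q • a = q • b) : a = b := by
  funext i
  have := congrFun h i
  simp only [Pi.smul_apply, smul_eq_mul] at this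
  exact mul_left_cancel₀ hq this

end Helpers

section DvdState
variable {F : Type*} [Field F]

lemma dvd_state {s nk : ℕ} (A : Matrix (Fin s) (Fin s) F) (Cm : Matrix (Fin nk) (Fin s) F)
    (L0 : Matrix (Fin s) (Fin s × Fin nk) F)
    (hL0 : L0 * Matrix.of (fun (p : Fin s × Fin nk) (j : Fin s) => (Cm * A ^ (p.1 : ℕ)) p.2 j) = 1)
    (r : F[X]) (x : Fin s → F[X]) (bv : Fin s → F[X]) (cv : Fin nk → F[X])
    (h1 : (A.map Polynomial.C).mulVec x = (X : F[X]) • x - r • bv)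
    (h2 : (Cm.map Polynomial.C).mulVec x = r • cv) :
    ∀ i, r ∣ x i := by
  -- powers of A applied to x are congruent to X^t • x mod r
  have c3 : ∀ t : ℕ, ∀ i, r ∣ (((A ^ t).map Polynomial.C).mulVec x) i - (X : F[X]) ^ t * x i := by
    intro t
    induction t with
    | zero =>
      intro i
      have : ((A ^ 0).map Polynomial.C) = 1 := by
        rw [pow_zero]
        exact Matrix.map_one _ (map_zero _) (map_one _)
      rw [this, Matrix.one_mulVec, pow_zero, one_mul, sub_self]
      exact dvd_zero r
    | succ t ih =>
      intro i
      have hsplit : ((A ^ (t+1)).map Polynomial.C) =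
          (A.map Polynomial.C) * ((A ^ t).map Polynomial.C) := by
        rw [pow_succ']
        exact Matrix.map_mul
      rw [hsplit, ← Matrix.mulVec_mulVec]
      set yt := ((A ^ t).map Polynomial.C).mulVec x with hyt
      have hdecomp : ((A.map Polynomial.C).mulVec yt) i - (X : F[X]) ^ (t+1) * x i =
          (∑ j, Polynomial.C (A i j) * (yt j - (X : F[X]) ^ t * x j)) +
            (X : F[X]) ^ t * (((A.map Polynomial.C).mulVec x) i - (X : F[X]) * x i) := by
        have e1 : ((A.map Polynomial.C).mulVec yt) i = ∑ j, Polynomial.C (A i j) * yt j := rfl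
        have e2 : ((A.map Polynomial.C).mulVec x) i = ∑ j, Polynomial.C (A i j) * x j := rfl
        have h7 : ∑ j, Polynomial.C (A i j) * (yt j - (X : F[X]) ^ t * x j) =
            (∑ j, Polynomial.C (A i j) * yt j) -
              (X : F[X]) ^ t * ∑ j, Polynomial.C (A i j) * x j := by
          rw [Finset.mul_sum, ← Finset.sum_sub_distrib]
          exact Finset.sum_congr rfl fun j _ => by ring
        rw [e1, e2, h7]
        ring
      rw [hdecomp]
      refine dvd_add (Finset.dvd_sum fun j _ => Dvd.dvd.mul_left (ih j) _) ?_
      have : ((A.map Polynomial.C).mulVec x) i - (X : F[X]) * x i = r * (-bv i) := by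
        rw [h1]
        have : ((X : F[X]) • x - r • bv) i = X * x i - r * bv i := rfl
        rw [this]; ring
      rw [this]
      exact Dvd.dvd.mul_left (Dvd.intro _ rfl) _
  -- observability rows applied to x are divisible by r
  have c4 : ∀ (t : Fin s) (ρ : Fin nk), r ∣ (((Cm * A ^ (t : ℕ)).map Polynomial.C).mulVec x) ρ := by
    intro t ρ
    have hsplit : ((Cm * A ^ (t : ℕ)).map Polynomial.C) =
        (Cm.map Polynomial.C) * ((A ^ (t : ℕ)).map Polynomial.C) := Matrix.map_mul
    rw [hsplit, ← Matrix.mulVec_mulVec]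
    set yt := ((A ^ (t : ℕ)).map Polynomial.C).mulVec x with hyt
    have hdecomp : ((Cm.map Polynomial.C).mulVec yt) ρ =
        (∑ j, Polynomial.C (Cm ρ j) * (yt j - (X : F[X]) ^ (t : ℕ) * x j)) +
          (X : F[X]) ^ (t : ℕ) * (((Cm.map Polynomial.C).mulVec x) ρ) := by
      have e1 : ((Cm.map Polynomial.C).mulVec yt) ρ = ∑ j, Polynomial.C (Cm ρ j) * yt j := rfl
      have e2 : ((Cm.map Polynomial.C).mulVec x) ρ = ∑ j, Polynomial.C (Cm ρ j) * x j := rfl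
      have h7 : ∑ j, Polynomial.C (Cm ρ j) * (yt j - (X : F[X]) ^ (t : ℕ) * x j) =
          (∑ j, Polynomial.C (Cm ρ j) * yt j) -
            (X : F[X]) ^ (t : ℕ) * ∑ j, Polynomial.C (Cm ρ j) * x j := by
        rw [Finset.mul_sum, ← Finset.sum_sub_distrib]
        exact Finset.sum_congr rfl fun j _ => by ring
      rw [e1, e2, h7]
      ring
    rw [hdecomp]
    refine dvd_add (Finset.dvd_sum fun j _ => Dvd.dvd.mul_left (c3 (t : ℕ) j) _) ?_
    rw [h2]
    have : (r • cv) ρ = r * cv ρ := rfl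
    rw [this]
    exact Dvd.dvd.mul_left (Dvd.intro _ rfl) _
  -- reconstruct x from the observability rows via the left inverse
  intro i
  have h5 : (L0.map Polynomial.C) *
      ((Matrix.of (fun (p : Fin s × Fin nk) (j : Fin s) =>
        (Cm * A ^ (p.1 : ℕ)) p.2 j)).map Polynomial.C) = 1 := by
    rw [← Matrix.map_mul, hL0]
    exact Matrix.map_one _ (map_zero _) (map_one _)
  have h6 : x = (L0.map Polynomial.C).mulVec
      (((Matrix.of (fun (p : Fin s × Fin nk) (j : Fin s) =>
        (Cm * A ^ (p.1 : ℕ)) p.2 j)).map Polynomial.C).mulVec x) := by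
    rw [Matrix.mulVec_mulVec, h5, Matrix.one_mulVec]
  have h8 : x i = ∑ p : Fin s × Fin nk, Polynomial.C (L0 i p) *
      (((Matrix.of (fun (p : Fin s × Fin nk) (j : Fin s) =>
        (Cm * A ^ (p.1 : ℕ)) p.2 j)).map Polynomial.C).mulVec x) p := congrFun h6 i
  rw [h8]
  exact Finset.dvd_sum fun p _ => Dvd.dvd.mul_left (c4 p.1 p.2) _

end DvdState
section Forward

theorem forward_dir (F : Type*) [Field F] (s n k : ℕ)
    (A : Matrix (Fin s) (Fin s) F) (B : Matrix (Fin s) (Fin k) F)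
    (Cm : Matrix (Fin (n - k)) (Fin s) F) (Dm : Matrix (Fin (n - k)) (Fin k) F)
    (hreach : Matrix.rank (fun (i : Fin s) (p : Fin s × Fin k) => (A ^ (p.1 : ℕ) * B) i p.2) = s)
    (G : Matrix (Fin (n - k) ⊕ Fin k) (Fin k) F[X])
    (hset : {v : (Fin (n - k) ⊕ Fin k) → F[X] | ∃ x : Fin s → F[X],
          (X : F[X]) • x = (A.map Polynomial.C).mulVec x +
            (B.map Polynomial.C).mulVec (v ∘ Sum.inr) ∧
          v ∘ Sum.inl = (Cm.map Polynomial.C).mulVec x +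
            (Dm.map Polynomial.C).mulVec (v ∘ Sum.inr)} =
        {v | ∃ m : Fin k → F[X], v = G.mulVec m})
    (L : Matrix (Fin k) (Fin (n - k) ⊕ Fin k) F[X]) (hLG : L * G = 1) :
    Matrix.rank (fun (p : Fin s × Fin (n - k)) (j : Fin s) => (Cm * A ^ (p.1 : ℕ)) p.2 j) = s := by
  by_contra hne
  set Omat : Matrix (Fin s × Fin (n - k)) (Fin s) F :=
    fun (p : Fin s × Fin (n - k)) (j : Fin s) => (Cm * A ^ (p.1 : ℕ)) p.2 j with hOmat
  -- find x0 ≠ 0 in the kernel of the observability matrix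
  have hker : LinearMap.ker (Matrix.toLin' Omat) ≠ ⊥ := by
    intro hbot
    apply hne
    have hinj : Function.Injective (Matrix.toLin' Omat) := LinearMap.ker_eq_bot.mp hbot
    have := LinearMap.finrank_range_of_inj hinj
    rw [Module.finrank_fintype_fun_eq_card, Fintype.card_fin] at this
    exact this
  obtain ⟨x0, hx0mem, hx0ne⟩ := (Submodule.ne_bot_iff _).mp hker
  have hx0 : Omat.mulVec x0 = 0 := by
    rw [LinearMap.mem_ker, Matrix.toLin'_apply] at hx0mem; exact hx0mem
  have hobs0 : ∀ m : ℕ, m < s → Cm.mulVec ((A ^ m).mulVec x0) = 0 := by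
    intro m hm
    rw [Matrix.mulVec_mulVec]
    funext r
    exact congrFun hx0 (⟨m, hm⟩, r)
  -- reachability: write x0 as a combination of the A^t B columns
  have hsurj := surjective_of_rank_rows (M := fun (i : Fin s) (p : Fin s × Fin k) => (A ^ (p.1 : ℕ) * B) i p.2) (by rw [hreach, Fintype.card_fin])
  obtain ⟨c, hc⟩ := hsurj x0
  change Matrix.mulVec (fun (i : Fin s) (p : Fin s × Fin k) => (A ^ (p.1 : ℕ) * B) i p.2) c = x0 at hc
  set v : Fin s → Fin k → F := fun t j => c (t, j) with hv
  have hx0sum : x0 = ∑ t : Fin s, (A ^ (t : ℕ) * B).mulVec (v t) := by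
    rw [← hc]
    funext i
    simp only [Matrix.mulVec, dotProduct, Finset.sum_apply]
    rw [← Fintype.sum_prod_type']
  -- build input and partial state from reachability
  set u0 : Fin k → F[X] := ∑ t : Fin s, ((X : F[X]) ^ (t : ℕ)) • cvec (v t) with hu0
  set x1 : Fin s → F[X] := ∑ t : Fin s, zvec A (B.mulVec (v t)) (t : ℕ) with hx1
  have key1 : (X : F[X]) • x1 - (A.map Polynomial.C).mulVec x1 =
      (B.map Polynomial.C).mulVec u0 - cvec x0 := by
    rw [hx1, Finset.smul_sum, mulVec_sumv, ← Finset.sum_sub_distrib]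
    have e0 : ∀ t : Fin s, (X : F[X]) • zvec A (B.mulVec (v t)) (t : ℕ) -
        (A.map Polynomial.C).mulVec (zvec A (B.mulVec (v t)) (t : ℕ)) =
        (X : F[X]) ^ (t : ℕ) • cvec (B.mulVec (v t)) -
          cvec ((A ^ (t : ℕ)).mulVec (B.mulVec (v t))) := fun t => zvec_spec A _ _
    rw [Finset.sum_congr rfl (fun t _ => e0 t), Finset.sum_sub_distrib]
    congr 1
    · rw [hu0, mulVec_sumv]
      refine Finset.sum_congr rfl fun t _ => ?_
      rw [Matrix.mulVec_smul, mapC_mulVec_cvec]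
    · rw [hx0sum, cvec_sum]
      refine Finset.sum_congr rfl fun t _ => ?_
      rw [Matrix.mulVec_mulVec]
  -- the unobservable "autonomous" trajectory
  set q : F[X] := A.charpoly with hq
  have hqmonic : q.Monic := A.charpoly_monic
  have hqne : q ≠ 0 := hqmonic.ne_zero
  have hqdeg : q.natDegree = s := by rw [hq, Matrix.charpoly_natDegree_eq_dim, Fintype.card_fin]
  set x : Fin s → F[X] :=
    ∑ i ∈ Finset.range (s + 1), (Polynomial.C (q.coeff i) : F[X]) • zvec A x0 i with hx
  have key2 : (X : F[X]) • x - (A.map Polynomial.C).mulVec x = q • cvec x0 := by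
    rw [hx, Finset.smul_sum, mulVec_sumv, ← Finset.sum_sub_distrib]
    have e1 : ∀ i ∈ Finset.range (s + 1),
        (X : F[X]) • (Polynomial.C (q.coeff i) : F[X]) • zvec A x0 i -
          (A.map Polynomial.C).mulVec ((Polynomial.C (q.coeff i) : F[X]) • zvec A x0 i) =
        ((Polynomial.C (q.coeff i) * (X : F[X]) ^ i) : F[X]) • cvec x0 -
          (Polynomial.C (q.coeff i) : F[X]) • cvec ((A ^ i).mulVec x0) := by
      intro i _
      rw [Matrix.mulVec_smul, smul_comm (X : F[X]) (Polynomial.C (q.coeff i)), ← smul_sub,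
        zvec_spec, smul_sub, smul_smul]
    rw [Finset.sum_congr rfl e1, Finset.sum_sub_distrib]
    have e2 : ∑ i ∈ Finset.range (s + 1),
        ((Polynomial.C (q.coeff i) * (X : F[X]) ^ i) : F[X]) • cvec x0 = q • cvec x0 := by
      rw [← Finset.sum_smul]
      congr 1
      conv_rhs => rw [q.as_sum_range_C_mul_X_pow]
      rw [hqdeg]
    have e3 : ∑ i ∈ Finset.range (s + 1),
        (Polynomial.C (q.coeff i) : F[X]) • cvec ((A ^ i).mulVec x0) = 0 := by
      have e4 : ∀ i ∈ Finset.range (s + 1),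
          (Polynomial.C (q.coeff i) : F[X]) • cvec ((A ^ i).mulVec x0) =
            cvec ((q.coeff i • (A ^ i)).mulVec x0) := by
        intro i _
        rw [C_smul_cvec, Matrix.smul_mulVec]
      rw [Finset.sum_congr rfl e4, ← cvec_sum, ← sumMat_mulVec]
      have e5 : ∑ i ∈ Finset.range (s + 1), q.coeff i • A ^ i = 0 := by
        have := Matrix.aeval_self_charpoly A
        rwa [Polynomial.aeval_eq_sum_range' (n := s + 1) (by rw [← hq, hqdeg]; omega) A] at this
      rw [e5]
      funext j; simp [cvec]
    rw [e2, e3, sub_zero]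
  have key3 : (Cm.map Polynomial.C).mulVec x = 0 := by
    rw [hx, mulVec_sumv]
    refine Finset.sum_eq_zero fun i hi => ?_
    rw [Matrix.mulVec_smul, zvec_output A Cm x0 i
      (fun m hm => hobs0 m (lt_of_lt_of_le hm (Nat.lt_succ_iff.mp (Finset.mem_range.mp hi)))),
      smul_zero]
  -- assemble the codeword q • w
  set ξ : Fin s → F[X] := x + q • x1 with hξ
  set y : Fin (n - k) → F[X] :=
    (Cm.map Polynomial.C).mulVec x1 + (Dm.map Polynomial.C).mulVec u0 with hy
  set w : (Fin (n - k) ⊕ Fin k) → F[X] := Sum.elim y u0 with hw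
  have hwinr : ∀ r : F[X], (r • w) ∘ Sum.inr = r • u0 := fun r => rfl
  have hwinl : ∀ r : F[X], (r • w) ∘ Sum.inl = r • y := fun r => rfl
  have hξeq : (X : F[X]) • ξ - (A.map Polynomial.C).mulVec ξ =
      (B.map Polynomial.C).mulVec (q • u0) := by
    calc (X : F[X]) • ξ - (A.map Polynomial.C).mulVec ξ
        = ((X : F[X]) • x - (A.map Polynomial.C).mulVec x) +
          q • ((X : F[X]) • x1 - (A.map Polynomial.C).mulVec x1) := by
          rw [hξ, smul_add, Matrix.mulVec_add, smul_sub,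
            smul_comm (X : F[X]) q x1, Matrix.mulVec_smul]
          abel
      _ = q • cvec x0 + q • ((B.map Polynomial.C).mulVec u0 - cvec x0) := by rw [key1, key2]
      _ = q • (B.map Polynomial.C).mulVec u0 := by rw [smul_sub]; abel
      _ = (B.map Polynomial.C).mulVec (q • u0) := (Matrix.mulVec_smul _ _ _).symm
  have hmem : q • w ∈ {v : (Fin (n - k) ⊕ Fin k) → F[X] | ∃ x : Fin s → F[X],
          (X : F[X]) • x = (A.map Polynomial.C).mulVec x +
            (B.map Polynomial.C).mulVec (v ∘ Sum.inr) ∧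
          v ∘ Sum.inl = (Cm.map Polynomial.C).mulVec x +
            (Dm.map Polynomial.C).mulVec (v ∘ Sum.inr)} := by
    refine ⟨ξ, ?_, ?_⟩
    · rw [hwinr]
      exact sub_eq_iff_eq_add'.mp hξeq
    · rw [hwinr, hwinl]
      rw [hξ, Matrix.mulVec_add, key3, zero_add, Matrix.mulVec_smul, Matrix.mulVec_smul, hy,
        smul_add]
  -- use the generator matrix and its left inverse to divide by q
  rw [hset] at hmem
  obtain ⟨mm, hmm⟩ := hmem
  have hmmval : mm = q • L.mulVec w := by
    have h1 : L.mulVec (q • w) = L.mulVec (G.mulVec mm) := by rw [hmm]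
    rw [Matrix.mulVec_mulVec, hLG, Matrix.one_mulVec, Matrix.mulVec_smul] at h1
    exact h1.symm
  have hwcode : w = G.mulVec (L.mulVec w) := by
    refine smul_vec_cancel hqne ?_
    rw [hmm, hmmval, Matrix.mulVec_smul]
  have hwmem : w ∈ {v : (Fin (n - k) ⊕ Fin k) → F[X] | ∃ x : Fin s → F[X],
          (X : F[X]) • x = (A.map Polynomial.C).mulVec x +
            (B.map Polynomial.C).mulVec (v ∘ Sum.inr) ∧
          v ∘ Sum.inl = (Cm.map Polynomial.C).mulVec x +
            (Dm.map Polynomial.C).mulVec (v ∘ Sum.inr)} := by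
    rw [hset]
    exact ⟨L.mulVec w, hwcode⟩
  obtain ⟨x', hx'1, _⟩ := hwmem
  have hwinr' : w ∘ Sum.inr = u0 := rfl
  rw [hwinr'] at hx'1
  -- uniqueness of the state: q • x' = ξ
  have he : (X : F[X]) • (q • x') - (A.map Polynomial.C).mulVec (q • x') =
      (X : F[X]) • ξ - (A.map Polynomial.C).mulVec ξ := by
    rw [smul_comm (X : F[X]) q x', Matrix.mulVec_smul, ← smul_sub, hξeq]
    rw [hx'1]
    rw [add_sub_cancel_left, Matrix.mulVec_smul]
  have hqx' : q • x' = ξ := by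
    have hδ : (X : F[X]) • (q • x' - ξ) =
        (A.map Polynomial.C).mulVec (q • x' - ξ) + 0 := by
      rw [add_zero, smul_sub, Matrix.mulVec_sub]
      exact sub_eq_sub_iff_sub_eq_sub.mp he
    have h0 := keyA A _ _ hδ (fun i => by simp)
    exact sub_eq_zero.mp h0
  -- divide the autonomous trajectory by q and derive x0 = 0
  have hxdiv : x = q • (x' - x1) := by
    rw [smul_sub, hqx', hξ]; abel
  have hq2 : q • ((X : F[X]) • (x' - x1) - (A.map Polynomial.C).mulVec (x' - x1)) =
      q • cvec x0 := by
    rw [smul_sub, ← Matrix.mulVec_smul, ← smul_comm (X : F[X]) q (x' - x1), ← hxdiv]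
    exact key2
  have hsub := smul_vec_cancel hqne hq2
  have htilde0 : x' - x1 = 0 :=
    keyA A _ _ (sub_eq_iff_eq_add'.mp hsub) (fun i => by simp [cvec])
  rw [htilde0] at hsub
  apply hx0ne
  funext i
  have := congrFun hsub i
  simp only [Pi.sub_apply, Pi.smul_apply, Pi.zero_apply, smul_zero, sub_zero, smul_eq_mul,
    mul_zero] at this
  have h0 : (0 : F[X]) = Polynomial.C (x0 i) := by
    simpa [cvec] using this
  have := h0.symm
  rwa [Polynomial.C_eq_zero] at this

end Forward
section Backward

variable {F : Type*} [Field F]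

lemma map_mulVec_comm {E : Type*} [CommRing E] (φ : F[X] →+* E) {m p : Type*} [Fintype p]
    (M : Matrix m p F) (z : p → F[X]) :
    (M.map (φ.comp Polynomial.C)).mulVec (fun j => φ (z j)) =
      fun i => φ (((M.map Polynomial.C).mulVec z) i) := by
  funext i
  simp [Matrix.mulVec, dotProduct, map_sum, _root_.map_mul]

theorem backward_dir (F : Type*) [Field F] (s n k : ℕ)
    (A : Matrix (Fin s) (Fin s) F) (B : Matrix (Fin s) (Fin k) F)
    (Cm : Matrix (Fin (n - k)) (Fin s) F) (Dm : Matrix (Fin (n - k)) (Fin k) F)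
    (hobs : Matrix.rank (fun (p : Fin s × Fin (n - k)) (j : Fin s) => (Cm * A ^ (p.1 : ℕ)) p.2 j) = s) :
    (∃ G : Matrix (Fin (n - k) ⊕ Fin k) (Fin k) F[X],
      LinearIndependent F[X] G.transpose ∧
      {v : (Fin (n - k) ⊕ Fin k) → F[X] | ∃ x : Fin s → F[X],
          (X : F[X]) • x = (A.map Polynomial.C).mulVec x +
            (B.map Polynomial.C).mulVec (v ∘ Sum.inr) ∧
          v ∘ Sum.inl = (Cm.map Polynomial.C).mulVec x +
            (Dm.map Polynomial.C).mulVec (v ∘ Sum.inr)} =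
        {v | ∃ m : Fin k → F[X], v = G.mulVec m} ∧
      ∃ L : Matrix (Fin k) (Fin (n - k) ⊕ Fin k) F[X], L * G = 1) := by
  classical
  set S : Set ((Fin (n - k) ⊕ Fin k) → F[X]) := {v | ∃ x : Fin s → F[X],
          (X : F[X]) • x = (A.map Polynomial.C).mulVec x +
            (B.map Polynomial.C).mulVec (v ∘ Sum.inr) ∧
          v ∘ Sum.inl = (Cm.map Polynomial.C).mulVec x +
            (Dm.map Polynomial.C).mulVec (v ∘ Sum.inr)} with hS
  -- the code is a submodule
  have hadd : ∀ v v', v ∈ S → v' ∈ S → v + v' ∈ S := by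
    rintro v v' ⟨x, h1, h2⟩ ⟨x', h1', h2'⟩
    refine ⟨x + x', ?_, ?_⟩
    · have : (v + v') ∘ Sum.inr = v ∘ Sum.inr + v' ∘ Sum.inr := rfl
      rw [this, smul_add, Matrix.mulVec_add, Matrix.mulVec_add, h1, h1']
      abel
    · have e1 : (v + v') ∘ Sum.inr = v ∘ Sum.inr + v' ∘ Sum.inr := rfl
      have e2 : (v + v') ∘ Sum.inl = v ∘ Sum.inl + v' ∘ Sum.inl := rfl
      rw [e1, e2, Matrix.mulVec_add, Matrix.mulVec_add, h2, h2']
      abel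
  have hsmul : ∀ (r : F[X]) v, v ∈ S → r • v ∈ S := by
    rintro r v ⟨x, h1, h2⟩
    refine ⟨r • x, ?_, ?_⟩
    · have : (r • v) ∘ Sum.inr = r • (v ∘ Sum.inr) := rfl
      rw [this, Matrix.mulVec_smul, Matrix.mulVec_smul, smul_comm (X : F[X]) r x, h1, smul_add]
    · have e1 : (r • v) ∘ Sum.inr = r • (v ∘ Sum.inr) := rfl
      have e2 : (r • v) ∘ Sum.inl = r • (v ∘ Sum.inl) := rfl
      rw [e1, e2, Matrix.mulVec_smul, Matrix.mulVec_smul, h2, smul_add]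
  have hzero : (0 : (Fin (n - k) ⊕ Fin k) → F[X]) ∈ S := by
    refine ⟨0, ?_, ?_⟩
    · have : (0 : (Fin (n - k) ⊕ Fin k) → F[X]) ∘ Sum.inr = 0 := rfl
      rw [this]; simp
    · have e1 : (0 : (Fin (n - k) ⊕ Fin k) → F[X]) ∘ Sum.inr = 0 := rfl
      have e2 : (0 : (Fin (n - k) ⊕ Fin k) → F[X]) ∘ Sum.inl = 0 := rfl
      rw [e1, e2]; simp
  set code : Submodule F[X] ((Fin (n - k) ⊕ Fin k) → F[X]) :=
    { carrier := S
      add_mem' := fun hv hv' => hadd _ _ hv hv'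
      zero_mem' := hzero
      smul_mem' := fun r v hv => hsmul r v hv } with hcode
  have hmemS : ∀ v, v ∈ code ↔ v ∈ S := fun v => Iff.rfl
  -- observability left inverse
  obtain ⟨L0, hL0⟩ := exists_left_inv_of_rank (M := fun (p : Fin s × Fin (n - k)) (j : Fin s) => (Cm * A ^ (p.1 : ℕ)) p.2 j) (by rw [hobs, Fintype.card_fin])
  -- purity / divisibility closure
  have hpure : ∀ (r : F[X]) (w : (Fin (n - k) ⊕ Fin k) → F[X]),
      r ≠ 0 → r • w ∈ code → w ∈ code := by
    intro r w hr hrw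
    obtain ⟨x, h1, h2⟩ := (hmemS _).mp hrw
    have hinr : (r • w) ∘ Sum.inr = r • (w ∘ Sum.inr) := rfl
    have hinl : (r • w) ∘ Sum.inl = r • (w ∘ Sum.inl) := rfl
    rw [hinr] at h1
    rw [hinl, hinr] at h2
    have h1' : (A.map Polynomial.C).mulVec x = (X : F[X]) • x -
        r • ((B.map Polynomial.C).mulVec (w ∘ Sum.inr)) := by
      rw [← Matrix.mulVec_smul, h1]; abel
    have h2' : (Cm.map Polynomial.C).mulVec x =
        r • ((w ∘ Sum.inl) - (Dm.map Polynomial.C).mulVec (w ∘ Sum.inr)) := by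
      rw [smul_sub, ← Matrix.mulVec_smul]
      exact eq_sub_iff_add_eq.mpr h2.symm
    have hdvd := dvd_state A Cm L0 hL0 r x _ _ h1' h2'
    choose x' hx' using hdvd
    have hx'v : x = r • x' := funext fun i => hx' i
    refine (hmemS w).mpr ⟨x', ?_, ?_⟩
    · refine smul_vec_cancel hr ?_
      calc r • ((X : F[X]) • x') = (X : F[X]) • x := by rw [hx'v, smul_comm]
        _ = (A.map Polynomial.C).mulVec x +
            (B.map Polynomial.C).mulVec (r • (w ∘ Sum.inr)) := h1
        _ = r • ((A.map Polynomial.C).mulVec x' +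
            (B.map Polynomial.C).mulVec (w ∘ Sum.inr)) := by
            rw [hx'v, Matrix.mulVec_smul, Matrix.mulVec_smul, smul_add]
    · refine smul_vec_cancel hr ?_
      calc r • (w ∘ Sum.inl) = (Cm.map Polynomial.C).mulVec x +
            (Dm.map Polynomial.C).mulVec (r • (w ∘ Sum.inr)) := h2
        _ = r • ((Cm.map Polynomial.C).mulVec x' +
            (Dm.map Polynomial.C).mulVec (w ∘ Sum.inr)) := by
            rw [hx'v, Matrix.mulVec_smul, Matrix.mulVec_smul, smul_add]
  -- the quotient is finite and torsion-free, hence free/projective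
  haveI : Module.Finite F[X] (((Fin (n - k) ⊕ Fin k) → F[X]) ⧸ code) :=
    Module.Finite.of_surjective code.mkQ (Submodule.mkQ_surjective code)
  haveI : NoZeroSMulDivisors F[X] (((Fin (n - k) ⊕ Fin k) → F[X]) ⧸ code) := by
    refine ⟨fun {r q} hrq => ?_⟩
    by_cases hr : r = 0
    · exact Or.inl hr
    · right
      obtain ⟨w, rfl⟩ := Submodule.mkQ_surjective code q
      have h0 : code.mkQ (r • w) = 0 := by rw [LinearMap.map_smul]; exact hrq
      have hmem : r • w ∈ code := by
        rwa [← Submodule.ker_mkQ code, LinearMap.mem_ker]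
      have hw := hpure r w hr hmem
      rw [Submodule.mkQ_apply, Submodule.Quotient.mk_eq_zero]
      exact hw
  obtain ⟨σ, hσ⟩ := Module.projective_lifting_property code.mkQ LinearMap.id
    (Submodule.mkQ_surjective code)
  set π := (LinearMap.id : ((Fin (n - k) ⊕ Fin k) → F[X]) →ₗ[F[X]] _) - σ ∘ₗ code.mkQ with hπ
  have hπmem : ∀ v, π v ∈ code := by
    intro v
    have h0 : code.mkQ (π v) = 0 := by
      rw [hπ]
      simp only [LinearMap.sub_apply, LinearMap.id_apply, LinearMap.comp_apply, map_sub]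
      have h1 := LinearMap.congr_fun hσ (code.mkQ v)
      simp only [LinearMap.comp_apply, LinearMap.id_apply] at h1
      rw [h1, sub_self]
    rwa [← Submodule.ker_mkQ code, LinearMap.mem_ker]
  have hπid : ∀ v, v ∈ code → π v = v := by
    intro v hv
    have h0 : code.mkQ v = 0 := by
      rw [Submodule.mkQ_apply, Submodule.Quotient.mk_eq_zero]; exact hv
    rw [hπ]
    simp [LinearMap.sub_apply, h0]
  -- basis of the code
  obtain ⟨m0, b0⟩ := Submodule.basisOfPid (Pi.basisFun F[X] (Fin (n - k) ⊕ Fin k)) code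
  -- the projection to inputs is injective on the code
  set prj : code →ₗ[F[X]] (Fin k → F[X]) :=
    { toFun := fun w => (w : (Fin (n - k) ⊕ Fin k) → F[X]) ∘ Sum.inr
      map_add' := fun a b => rfl
      map_smul' := fun r a => rfl } with hprj
  have hprjinj : Function.Injective prj := by
    rw [← LinearMap.ker_eq_bot, LinearMap.ker_eq_bot']
    rintro ⟨v, hv⟩ hv0
    have hv0' : v ∘ Sum.inr = 0 := hv0
    obtain ⟨x, h1, h2⟩ := (hmemS v).mp hv
    rw [hv0'] at h1 h2
    have hx0 : x = 0 := by
      refine keyA A x 0 ?_ (fun i => by simp)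
      rw [h1, Matrix.mulVec_zero]
    have hvl : v ∘ Sum.inl = 0 := by
      rw [h2, hx0, Matrix.mulVec_zero, Matrix.mulVec_zero, add_zero]
    apply Subtype.ext
    funext i
    cases i with
    | inl i => exact congrFun hvl i
    | inr i => exact congrFun hv0' i
  -- the characteristic matrix and its adjugate give an injection of inputs into the code
  set Pm : Matrix (Fin s) (Fin s) F[X] := (X : F[X]) • 1 - A.map Polynomial.C with hPmdef
  have hPmchar : Pm = charmatrix A := by
    ext i j
    by_cases hij : i = j <;>
      simp [hPmdef, charmatrix_apply, Matrix.sub_apply, Matrix.smul_apply, Matrix.one_apply,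
        Matrix.diagonal_apply, hij, Matrix.map_apply, smul_eq_mul, mul_ite, mul_one, mul_zero]
  have hdet : Pm.det ≠ 0 := by
    rw [hPmchar]
    exact A.charpoly_monic.ne_zero
  have hPmv : ∀ z : Fin s → F[X],
      Pm.mulVec z = (X : F[X]) • z - (A.map Polynomial.C).mulVec z := by
    intro z
    rw [hPmdef, Matrix.sub_mulVec, Matrix.smul_mulVec, Matrix.one_mulVec]
  have hPadj : ∀ z : Fin s → F[X], Pm.mulVec (Pm.adjugate.mulVec z) = Pm.det • z := by
    intro z
    rw [Matrix.mulVec_mulVec, Matrix.mul_adjugate, Matrix.smul_mulVec, Matrix.one_mulVec]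
  have hcw : ∀ u : Fin k → F[X],
      Sum.elim ((Cm.map Polynomial.C).mulVec (Pm.adjugate.mulVec ((B.map Polynomial.C).mulVec u)) +
        (Dm.map Polynomial.C).mulVec (Pm.det • u)) (Pm.det • u) ∈ code := by
    intro u
    refine (hmemS _).mpr ⟨Pm.adjugate.mulVec ((B.map Polynomial.C).mulVec u), ?_, ?_⟩
    · show (X : F[X]) • Pm.adjugate.mulVec ((B.map Polynomial.C).mulVec u) =
        (A.map Polynomial.C).mulVec (Pm.adjugate.mulVec ((B.map Polynomial.C).mulVec u)) +
          (B.map Polynomial.C).mulVec (Pm.det • u)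
      have h3 := hPadj ((B.map Polynomial.C).mulVec u)
      rw [hPmv] at h3
      rw [Matrix.mulVec_smul]
      exact sub_eq_iff_eq_add'.mp h3
    · rfl
  set incl : (Fin k → F[X]) →ₗ[F[X]] code :=
    { toFun := fun u => ⟨Sum.elim
        ((Cm.map Polynomial.C).mulVec (Pm.adjugate.mulVec ((B.map Polynomial.C).mulVec u)) +
          (Dm.map Polynomial.C).mulVec (Pm.det • u)) (Pm.det • u), hcw u⟩
      map_add' := by
        intro a b
        apply Subtype.ext
        funext i
        cases i with
        | inl i =>
          show _ = _
          simp [Matrix.mulVec_add, smul_add]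
          ring
        | inr i =>
          show _ = _
          simp [smul_add]
      map_smul' := by
        intro r a
        apply Subtype.ext
        funext i
        cases i with
        | inl i =>
          show _ = _
          simp [Matrix.mulVec_smul, smul_comm r]
          ring
        | inr i =>
          show _ = _
          simp [smul_comm r]
          ring  } with hincl
  have hinclinj : Function.Injective incl := by
    rw [← LinearMap.ker_eq_bot, LinearMap.ker_eq_bot']
    intro u hu
    have h4 : Pm.det • u = 0 := by
      have := congrArg (fun (w : code) => (w : (Fin (n - k) ⊕ Fin k) → F[X]) ∘ Sum.inr) hu
      exact this
    funext i
    have := congrFun h4 i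
    simp only [Pi.smul_apply, smul_eq_mul, Pi.zero_apply] at this
    rcases mul_eq_zero.mp this with h | h
    · exact absurd h hdet
    · exact h
  -- counting: the code has rank k
  have hr1 : Module.rank F[X] code = m0 := by
    rw [rank_eq_card_basis b0, Fintype.card_fin]
  have hr2 : Module.rank F[X] code ≤ k := by
    have := LinearMap.rank_le_of_injective _ hprjinj
    rwa [rank_fin_fun] at this
  have hr3 : (k : Cardinal) ≤ Module.rank F[X] code := by
    have := LinearMap.rank_le_of_injective _ hinclinj
    rwa [rank_fin_fun] at this
  have hm0k : m0 = k := by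
    have hA : (m0 : Cardinal) ≤ k := hr1 ▸ hr2
    have hB : (k : Cardinal) ≤ m0 := hr1 ▸ hr3
    exact_mod_cast le_antisymm hA hB
  set b' : Module.Basis (Fin k) F[X] code := b0.reindex (finCongr hm0k) with hb'
  set G : Matrix (Fin (n - k) ⊕ Fin k) (Fin k) F[X] :=
    Matrix.of (fun i j => ((b' j : (Fin (n - k) ⊕ Fin k) → F[X])) i) with hG
  have hGmul : ∀ mm : Fin k → F[X],
      G.mulVec mm = ∑ j, mm j • ((b' j : (Fin (n - k) ⊕ Fin k) → F[X])) := by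
    intro mm
    funext i
    simp only [Matrix.mulVec, dotProduct, hG, Matrix.of_apply, Finset.sum_apply,
      Pi.smul_apply, smul_eq_mul]
    exact Finset.sum_congr rfl fun j _ => mul_comm _ _
  have hGmem : ∀ mm, G.mulVec mm ∈ code := by
    intro mm
    rw [hGmul]
    exact Submodule.sum_mem code fun j _ => Submodule.smul_mem code _ (b' j).2
  refine ⟨G, ?_, ?_, ?_⟩
  · have hli := b'.linearIndependent
    have hmap := hli.map' code.subtype (Submodule.ker_subtype code)
    exact hmap
  · apply Set.eq_of_subset_of_subset
    · intro v hv
      have hvc : v ∈ code := (hmemS v).mpr hv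
      refine ⟨fun j => b'.repr ⟨v, hvc⟩ j, ?_⟩
      rw [hGmul]
      have hs2 := b'.sum_repr ⟨v, hvc⟩
      calc v = ((⟨v, hvc⟩ : code) : (Fin (n - k) ⊕ Fin k) → F[X]) := rfl
        _ = ((∑ j, b'.repr ⟨v, hvc⟩ j • b' j : code) : (Fin (n - k) ⊕ Fin k) → F[X]) := by
            rw [hs2]
        _ = ∑ j, b'.repr ⟨v, hvc⟩ j • ((b' j : code) : (Fin (n - k) ⊕ Fin k) → F[X]) := by
            simp only [Submodule.coe_sum, Submodule.coe_smul]
    · rintro v ⟨mm, rfl⟩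
      exact (hmemS _).mp (hGmem mm)
  · set πc : ((Fin (n - k) ⊕ Fin k) → F[X]) →ₗ[F[X]] code :=
      LinearMap.codRestrict code π hπmem with hπc
    set ℓ : ((Fin (n - k) ⊕ Fin k) → F[X]) →ₗ[F[X]] (Fin k → F[X]) :=
      (Finsupp.linearEquivFunOnFinite F[X] F[X] (Fin k)).toLinearMap ∘ₗ
        b'.repr.toLinearMap ∘ₗ πc with hℓ
    refine ⟨LinearMap.toMatrix' ℓ, ?_⟩
    have hcomp : ℓ ∘ₗ Matrix.toLin' G = LinearMap.id := by
      apply LinearMap.ext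
      intro u
      simp only [LinearMap.comp_apply, Matrix.toLin'_apply, LinearMap.id_apply]
      have hGu : G.mulVec u ∈ code := hGmem u
      have hπG : πc (G.mulVec u) = ⟨G.mulVec u, hGu⟩ := Subtype.ext (hπid _ hGu)
      have hrepr : (⟨G.mulVec u, hGu⟩ : code) = ∑ j, u j • b' j := by
        apply Subtype.ext
        show G.mulVec u = ((∑ j, u j • b' j : code) : (Fin (n - k) ⊕ Fin k) → F[X])
        rw [hGmul]
        simp
      rw [hℓ]
      simp only [LinearMap.comp_apply, LinearEquiv.coe_toLinearMap]
      have h9 : b'.repr (πc (G.mulVec u)) = b'.repr (∑ j, u j • b' j) := by rw [hπG, hrepr]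
      funext j
      calc (Finsupp.linearEquivFunOnFinite F[X] F[X] (Fin k)) (b'.repr (πc (G.mulVec u))) j
          = b'.repr (πc (G.mulVec u)) j := rfl
        _ = b'.repr (∑ j, u j • b' j) j := by rw [h9]
        _ = u j := by rw [b'.repr_sum_self]
    calc LinearMap.toMatrix' ℓ * G
        = LinearMap.toMatrix' ℓ * LinearMap.toMatrix' (Matrix.toLin' G) := by
          rw [LinearMap.toMatrix'_toLin']
      _ = LinearMap.toMatrix' (ℓ ∘ₗ Matrix.toLin' G) := (LinearMap.toMatrix'_comp _ _).symm
      _ = 1 := by rw [hcomp, LinearMap.toMatrix'_id]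

end Backward

/-- Assume `(A,B)` is reachable. Then `𝒞(A,B,C,D)` is non-catastrophic (admits a
right prime generator matrix, i.e. one with a polynomial left inverse) iff
`(A,C)` is observable. -/
theorem stmt15 (F : Type*) [Field F] [Fintype F] (s n k : ℕ)
    (A : Matrix (Fin s) (Fin s) F) (B : Matrix (Fin s) (Fin k) F)
    (Cm : Matrix (Fin (n - k)) (Fin s) F) (Dm : Matrix (Fin (n - k)) (Fin k) F)
    (hreach : Matrix.rank (fun (i : Fin s) (p : Fin s × Fin k) => (A ^ (p.1 : ℕ) * B) i p.2) = s) :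
    (∃ G : Matrix (Fin (n - k) ⊕ Fin k) (Fin k) F[X],
      LinearIndependent F[X] G.transpose ∧
      -- G generates the code 𝒞(A,B,C,D):
      {v : (Fin (n - k) ⊕ Fin k) → F[X] | ∃ x : Fin s → F[X],
          (X : F[X]) • x = (A.map Polynomial.C).mulVec x +
            (B.map Polynomial.C).mulVec (v ∘ Sum.inr) ∧
          v ∘ Sum.inl = (Cm.map Polynomial.C).mulVec x +
            (Dm.map Polynomial.C).mulVec (v ∘ Sum.inr)} =
        {v | ∃ m : Fin k → F[X], v = G.mulVec m} ∧
      -- G is right prime: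
      ∃ L : Matrix (Fin k) (Fin (n - k) ⊕ Fin k) F[X], L * G = 1) ↔
    Matrix.rank (fun (p : Fin s × Fin (n - k)) (j : Fin s) => (Cm * A ^ (p.1 : ℕ)) p.2 j) = s := by
  constructor
  · rintro ⟨G, _, hset, L, hLG⟩
    exact forward_dir F s n k A B Cm Dm hreach G hset L hLG
  · intro hobs
    exact backward_dir F s n k A B Cm Dm hobs
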